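/- For every natural number r there exists a natural number N such that for all natural numbers g and k with g ≥ N, k ≥ 1 and 10·k ≤ g + 15, one has ((g−1)/2 − k + 2)^(g−r) > g! (as real numbers), where the base (g−1)/2 − k + 2 is a positive real number under these hypotheses. -/

import Mathlib

open Real Filter

lemma fact_le_aux : ∀ n : ℕ, 1 ≤ n → (Nat.factorial n : ℝ) ≤ Real.exp 1 * n * (n / Real.exp 1) ^ n := by
  intro n hn
  induction n with
  | zero => omega
  | succ m ih =>
    rcases Nat.eq_or_lt_of_le hn with h1 | h1
    · -- m + 1 = 1
      have : m = 0 := by omega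
      subst this
      norm_num [Nat.factorial]
    · have hm : 1 ≤ m := by omega
      have ihm := ih hm
      have hmpos : (0:ℝ) < m := by exact_mod_cast hm
      have hepos : (0:ℝ) < Real.exp 1 := Real.exp_pos 1
      -- key: exp 1 * m ^ (m+1) ≤ (m+1) ^ (m+1)
      have key : Real.exp 1 * (m:ℝ) ^ (m+1) ≤ ((m:ℝ)+1) ^ (m+1) := by
        have h2 : Real.exp ((1:ℝ)/(m+1)) ≤ ((m:ℝ)+1)/m := by
          have h3 : 1 - (1:ℝ)/(m+1) ≤ Real.exp (-(1/(m+1))) := by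
            have := Real.add_one_le_exp (-(1/((m:ℝ)+1)))
            linarith
          have h4 : 1 - (1:ℝ)/(m+1) = (m:ℝ)/(m+1) := by
            field_simp
            ring
          rw [h4] at h3
          have h5 : (0:ℝ) < (m:ℝ)/(m+1) := by positivity
          have h6 : Real.exp (1/((m:ℝ)+1)) = (Real.exp (-(1/((m:ℝ)+1))))⁻¹ := by
            rw [← Real.exp_neg]; ring_nf
          rw [h6]
          rw [inv_le_comm₀ (Real.exp_pos _) (by positivity)]
          · have : (((m:ℝ)+1)/m)⁻¹ = (m:ℝ)/(m+1) := by
              rw [inv_div]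
            rw [this]; exact h3
        have h7 : Real.exp 1 = (Real.exp ((1:ℝ)/(m+1))) ^ (m+1) := by
          rw [← Real.exp_nat_mul]
          congr 1
          push_cast
          field_simp
        rw [h7]
        calc (Real.exp ((1:ℝ)/(m+1))) ^ (m+1) * (m:ℝ)^(m+1)
            ≤ (((m:ℝ)+1)/m) ^ (m+1) * (m:ℝ)^(m+1) := by
              apply mul_le_mul_of_nonneg_right _ (by positivity)
              exact pow_le_pow_left₀ (Real.exp_pos _).le h2 _
          _ = ((m:ℝ)+1) ^ (m+1) := by
              rw [div_pow, div_mul_eq_mul_div, mul_div_assoc,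
                div_self (by positivity : (m:ℝ)^(m+1) ≠ 0), mul_one]
      have step : ((m:ℝ)+1) * (Real.exp 1 * m * ((m:ℝ)/Real.exp 1)^m)
          ≤ Real.exp 1 * ((m:ℝ)+1) * (((m:ℝ)+1)/Real.exp 1)^(m+1) := by
        have L : ((m:ℝ)+1) * (Real.exp 1 * m * ((m:ℝ)/Real.exp 1)^m)
            = (((m:ℝ)+1)*Real.exp 1*(m:ℝ)*(m:ℝ)^m)/(Real.exp 1)^m := by
          rw [div_pow]; ring
        have R : Real.exp 1 * ((m:ℝ)+1) * (((m:ℝ)+1)/Real.exp 1)^(m+1)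
            = (Real.exp 1*((m:ℝ)+1)*((m:ℝ)+1)^(m+1))/(Real.exp 1)^(m+1) := by
          rw [div_pow]; ring
        rw [L, R, div_le_div_iff₀ (pow_pos hepos m) (pow_pos hepos (m+1))]
        have e1 : ((m:ℝ)+1)*Real.exp 1*(m:ℝ)*(m:ℝ)^m * (Real.exp 1)^(m+1)
            = (((m:ℝ)+1)*Real.exp 1*(Real.exp 1)^m) * (Real.exp 1 * (m:ℝ)^(m+1)) := by
          rw [pow_succ, pow_succ]; ring
        have e2 : Real.exp 1*((m:ℝ)+1)*((m:ℝ)+1)^(m+1) * (Real.exp 1)^m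
            = (((m:ℝ)+1)*Real.exp 1*(Real.exp 1)^m) * (((m:ℝ)+1)^(m+1)) := by ring
        rw [e1, e2]
        exact mul_le_mul_of_nonneg_left key (by positivity)
      calc (Nat.factorial (m+1) : ℝ) = ((m:ℝ)+1) * (Nat.factorial m : ℝ) := by
            rw [Nat.factorial_succ]; push_cast; ring
        _ ≤ ((m:ℝ)+1) * (Real.exp 1 * m * ((m:ℝ)/Real.exp 1)^m) := by
            apply mul_le_mul_of_nonneg_left ihm (by positivity)
        _ ≤ Real.exp 1 * ((m:ℝ)+1) * (((m:ℝ)+1)/Real.exp 1)^(m+1) := step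
        _ = Real.exp 1 * ((m+1:ℕ):ℝ) * (((m+1:ℕ):ℝ)/Real.exp 1)^(m+1) := by push_cast; ring

theorem stmt_8 (r : ℕ) :
    ∃ N : ℕ, ∀ g k : ℕ, g ≥ N → 1 ≤ k → 10 * k ≤ g + 15 →
      (((g : ℝ) - 1) / 2 - (k : ℝ) + 2) ^ (g - r) > (Nat.factorial g : ℝ) := by
  have hepos : (0:ℝ) < Real.exp 1 := Real.exp_pos 1
  have he25 : (2.5:ℝ) < Real.exp 1 := by
    have := Real.exp_one_gt_d9; linarith
  set q : ℝ := 5 / (2 * Real.exp 1) with hq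
  have hq0 : 0 ≤ q := by positivity
  have hq1 : q < 1 := by rw [hq, div_lt_one (by linarith)]; linarith
  have htend := tendsto_pow_const_mul_const_pow_of_lt_one (r+1) hq0 hq1
  have hev : ∀ᶠ n : ℕ in Filter.atTop, (n:ℝ)^(r+1) * q^n < (Real.exp 1)⁻¹ :=
    htend.eventually_lt_const (by positivity)
  obtain ⟨N₀, hN₀⟩ := Filter.eventually_atTop.mp hev
  refine ⟨max N₀ (r+1), fun g k hg hk hineq => ?_⟩
  have hgN : N₀ ≤ g := le_trans (le_max_left _ _) hg
  have hgr : r + 1 ≤ g := le_trans (le_max_right _ _) hg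
  have hg1 : 1 ≤ g := by omega
  have hGpos : (0:ℝ) < (g:ℝ) := by exact_mod_cast Nat.lt_of_lt_of_le Nat.zero_lt_one hg1
  have hk' : (k:ℝ) ≤ ((g:ℝ)+15)/10 := by
    rw [le_div_iff₀ (by norm_num : (0:ℝ) < 10)]
    have h10 : ((10*k:ℕ):ℝ) ≤ ((g+15:ℕ):ℝ) := by exact_mod_cast hineq
    push_cast at h10
    linarith
  have hb : 2*(g:ℝ)/5 ≤ ((g:ℝ)-1)/2 - (k:ℝ) + 2 := by linarith
  have hbpos : (0:ℝ) < 2*(g:ℝ)/5 := by positivity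
  set m := g - r with hm
  have hgm : g = m + r := by omega
  have hmg : m ≤ g := by omega
  have step1 : (2*(g:ℝ)/5)^m ≤ (((g:ℝ)-1)/2 - (k:ℝ) + 2)^m :=
    pow_le_pow_left₀ hbpos.le hb m
  have hfact : (Nat.factorial g : ℝ) ≤ Real.exp 1 * g * ((g:ℝ)/Real.exp 1)^g :=
    fact_le_aux g hg1
  have h₀ := hN₀ g hgN
  -- (g)^(r+1) * e < (2e/5)^g
  have hcancel : q^g * (2*Real.exp 1/5)^g = 1 := by
    rw [← mul_pow, hq]
    have : 5 / (2 * Real.exp 1) * (2 * Real.exp 1 / 5) = 1 := by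
      field_simp
    rw [this, one_pow]
  have h1 : ((g:ℝ))^(r+1) * Real.exp 1 < (2*Real.exp 1/5)^g := by
    have heq : ((g:ℝ))^(r+1) * Real.exp 1
        = ((g:ℝ)^(r+1) * q^g) * ((2*Real.exp 1/5)^g * Real.exp 1) := by
      rw [show ((g:ℝ)^(r+1) * q^g) * ((2*Real.exp 1/5)^g * Real.exp 1)
          = (g:ℝ)^(r+1) * (q^g * (2*Real.exp 1/5)^g) * Real.exp 1 from by ring, hcancel]
      ring
    rw [heq]
    calc ((g:ℝ)^(r+1) * q^g) * ((2*Real.exp 1/5)^g * Real.exp 1)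
        < (Real.exp 1)⁻¹ * ((2*Real.exp 1/5)^g * Real.exp 1) := by
          apply mul_lt_mul_of_pos_right h₀ (by positivity)
      _ = (2*Real.exp 1/5)^g := by field_simp
  have h2 : ((2:ℝ)/5)^g ≤ ((2:ℝ)/5)^m :=
    pow_le_pow_of_le_one (by norm_num) (by norm_num) hmg
  have h3 : ((g:ℝ))^(r+1) * Real.exp 1 < ((2:ℝ)/5)^m * (Real.exp 1)^g := by
    calc ((g:ℝ))^(r+1) * Real.exp 1 < (2*Real.exp 1/5)^g := h1
      _ = ((2:ℝ)/5)^g * (Real.exp 1)^g := by rw [← mul_pow]; ring_nf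
      _ ≤ ((2:ℝ)/5)^m * (Real.exp 1)^g := by
          apply mul_le_mul_of_nonneg_right h2 (by positivity)
  have h4 : ((g:ℝ))^(r+1) * Real.exp 1 / (Real.exp 1)^g < ((2:ℝ)/5)^m := by
    rw [div_lt_iff₀ (by positivity)]
    exact h3
  have hkey : Real.exp 1 * g * ((g:ℝ)/Real.exp 1)^g < (2*(g:ℝ)/5)^m := by
    have lhs_eq : Real.exp 1 * g * ((g:ℝ)/Real.exp 1)^g
        = (g:ℝ)^m * (((g:ℝ))^(r+1) * Real.exp 1 / (Real.exp 1)^g) := by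
      rw [div_pow]
      rw [show (g:ℝ)^g = (g:ℝ)^m * (g:ℝ)^r from by rw [← pow_add, ← hgm]]
      field_simp
      ring
    have rhs_eq : (2*(g:ℝ)/5)^m = (g:ℝ)^m * ((2:ℝ)/5)^m := by
      rw [← mul_pow]; ring_nf
    rw [lhs_eq, rhs_eq]
    exact mul_lt_mul_of_pos_left h4 (by positivity)
  exact lt_of_lt_of_le (lt_of_le_of_lt hfact hkey) step1
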